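/- Let G be a group, A an abelian group (written additively), and φ₁, …, φ_k : G → A homomorphisms (k ≥ 2). Then 𝓡(φ₁, …, φ_k) is the quotient abelian group A^{k−1}/Im D, where D : G → A^{k−1} is the homomorphism D(z) = (φ₂(z) − φ₁(z), …, φ_k(z) − φ₁(z)); the map Ψ : 𝓡(φ₁, …, φ_k) → 𝓡(φ₁, φ₂) × ⋯ × 𝓡(φ₁, φ_k), Ψ([(α₂, …, α_k)]) = ([α₂], …, [α_k]), is a surjective group homomorphism, so that 𝓡(φ₁, …, φ_k)/ker Ψ ≅ 𝓡(φ₁, φ₂) × ⋯ × 𝓡(φ₁, φ_k); and if R(φ₁, …, φ_k) < ∞, then R(φ₁, …, φ_k) = R(φ₁, φ₂)⋯R(φ₁, φ_k)·|ker Ψ|. -/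

import Mathlib

/-- The relation on `(k-1)`-tuples (`k = m+1`) defining the Reidemeister classes of a family
of homomorphisms `φ₁, …, φ_k : G → A` into an (additively written) group:
`(α₂,…,α_k) ∼ (β₂,…,β_k)` iff there is `z : G` with `β_i = φ₁(z) + α_i - φ_i(z)` for all
`i`.  The family is indexed by `Fin (m+1)`, `φ 0` playing the role of `φ₁`. -/
def mRelAdd {G A : Type*} [AddGroup G] [AddGroup A] {m : ℕ} (φ : Fin (m + 1) → (G →+ A))
    (α β : Fin m → A) : Prop :=
  ∃ z : G, ∀ i : Fin m, β i = φ 0 z + α i - φ i.succ z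

/-- The homomorphism `D : G → A^{k-1}`, `D(z) = (φ₂(z) - φ₁(z), …, φ_k(z) - φ₁(z))`. -/
def Dmap {G A : Type*} [AddGroup G] [AddCommGroup A] {m : ℕ}
    (φ : Fin (m + 1) → (G →+ A)) : G →+ (Fin m → A) :=
  AddMonoidHom.mk' (fun z i => φ i.succ z - φ 0 z) (by
    intro a b
    funext i
    simp only [Pi.add_apply, map_add]
    abel)

lemma mRelAdd_iff {G A : Type*} [AddGroup G] [AddCommGroup A] {m : ℕ}
    (φ : Fin (m + 1) → (G →+ A)) (α β : Fin m → A) :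
    mRelAdd φ α β ↔ ∃ z : G, β = α - Dmap φ z := by
  constructor
  · rintro ⟨z, h⟩
    refine ⟨z, funext fun i => ?_⟩
    simp [h i, Dmap]
    abel
  · rintro ⟨z, h⟩
    refine ⟨z, fun i => ?_⟩
    rw [h]
    simp [Dmap]
    abel

/-- Let `G` be a group, `A` an abelian group and `φ₁,…,φ_k : G → A` homomorphisms
(`k = m+1 ≥ 2`).  Then `𝓡(φ₁,…,φ_k)` is the quotient abelian group `A^{k-1} ⧸ Im D` where
`D(z) = (φ₂(z) - φ₁(z), …, φ_k(z) - φ₁(z))` (i.e. there is a bijection sending the class of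
a tuple to its coset); the map `Ψ([(α₂,…,α_k)]) = ([α₂],…,[α_k])` is a surjective group
homomorphism onto `𝓡(φ₁,φ₂) × ⋯ × 𝓡(φ₁,φ_k)`, so that `𝓡(φ₁,…,φ_k) ⧸ ker Ψ` is
isomorphic to `𝓡(φ₁,φ₂) × ⋯ × 𝓡(φ₁,φ_k)`; and if `R(φ₁,…,φ_k) < ∞` then
`R(φ₁,…,φ_k) = R(φ₁,φ₂)⋯R(φ₁,φ_k)·|ker Ψ|`. -/
theorem reidemeister_abelian_structure {G A : Type*} [AddGroup G] [AddCommGroup A] {m : ℕ}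
    (hm : 1 ≤ m) (φ : Fin (m + 1) → (G →+ A)) :
    (∃ e : Quot (mRelAdd φ) ≃ ((Fin m → A) ⧸ (Dmap φ).range),
      ∀ α : Fin m → A, e (Quot.mk _ α) = QuotientAddGroup.mk α) ∧
    ∃ Ψ : ((Fin m → A) ⧸ (Dmap φ).range) →+ (∀ i : Fin m, A ⧸ (φ i.succ - φ 0).range),
      (∀ α : Fin m → A,
        Ψ (QuotientAddGroup.mk α) = fun i => QuotientAddGroup.mk (α i)) ∧
      Function.Surjective Ψ ∧
      Nonempty ((((Fin m → A) ⧸ (Dmap φ).range) ⧸ Ψ.ker) ≃+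
        (∀ i : Fin m, A ⧸ (φ i.succ - φ 0).range)) ∧
      (ENat.card ((Fin m → A) ⧸ (Dmap φ).range) < ⊤ →
        Nat.card ((Fin m → A) ⧸ (Dmap φ).range) =
          (∏ i : Fin m, Nat.card (A ⧸ (φ i.succ - φ 0).range)) * Nat.card Ψ.ker) := by
  constructor
  · -- the bijection
    have toFun : Quot (mRelAdd φ) → ((Fin m → A) ⧸ (Dmap φ).range) :=
      Quot.lift (fun α => QuotientAddGroup.mk α) (by
        intro α β h
        rw [mRelAdd_iff] at h
        obtain ⟨z, rfl⟩ := h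
        rw [QuotientAddGroup.eq]
        exact ⟨-z, by rw [map_neg]; abel⟩)
    refine ⟨⟨Quot.lift (fun α => QuotientAddGroup.mk α) (by
        intro α β h
        rw [mRelAdd_iff] at h
        obtain ⟨z, rfl⟩ := h
        rw [QuotientAddGroup.eq]
        exact ⟨-z, by rw [map_neg]; abel⟩),
      fun q => Quotient.liftOn' q (Quot.mk _) (by
        intro α β h
        rw [QuotientAddGroup.leftRel_apply] at h
        obtain ⟨z, hz⟩ := h
        refine Quot.sound ?_
        rw [mRelAdd_iff]
        exact ⟨-z, by rw [map_neg, hz]; abel⟩), ?_, ?_⟩, fun α => rfl⟩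
    · intro q
      induction q using Quot.ind with
      | _ α => rfl
    · intro q
      induction q using QuotientAddGroup.induction_on with
      | _ α => rfl
  · -- the homomorphism Ψ
    have f : (Fin m → A) →+ (∀ i : Fin m, A ⧸ (φ i.succ - φ 0).range) :=
      AddMonoidHom.mk' (fun α i => QuotientAddGroup.mk (α i)) (by
        intro a b; funext i; rfl)
    have hker : (Dmap φ).range ≤
        (AddMonoidHom.mk' (fun (α : Fin m → A) i => QuotientAddGroup.mk (α i)) (by
          intro a b; funext i; rfl) :
          (Fin m → A) →+ (∀ i : Fin m, A ⧸ (φ i.succ - φ 0).range)).ker := by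
      rintro x ⟨z, rfl⟩
      simp only [AddMonoidHom.mem_ker, AddMonoidHom.mk'_apply]
      funext i
      simp only [Pi.zero_apply]
      exact (QuotientAddGroup.eq_zero_iff _).mpr ⟨z, rfl⟩
    refine ⟨QuotientAddGroup.lift _ _ hker, fun α => rfl, ?_⟩
    have hsurj : Function.Surjective (QuotientAddGroup.lift _ _ hker) := by
      intro q
      refine ⟨QuotientAddGroup.mk (fun i => Quotient.out (q i)), ?_⟩
      funext i
      simp only [QuotientAddGroup.lift_mk, AddMonoidHom.mk'_apply]
      exact Quotient.out_eq' (q i)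
    refine ⟨hsurj, ⟨QuotientAddGroup.quotientKerEquivOfSurjective _ hsurj⟩, ?_⟩
    intro hfin
    have : Finite ((Fin m → A) ⧸ (Dmap φ).range) := by
      by_contra h
      rw [not_finite_iff_infinite] at h
      exact absurd (ENat.card_eq_top_of_infinite (α := (Fin m → A) ⧸ (Dmap φ).range))
        (by exact hfin.ne)
    rw [← Nat.card_pi,
      AddSubgroup.card_eq_card_quotient_mul_card_addSubgroup
        (QuotientAddGroup.lift _ _ hker).ker,
      Nat.card_congr (QuotientAddGroup.quotientKerEquivOfSurjective _ hsurj).toEquiv]
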